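/- Given positive integers n ∣ m with n < m, an element h ∈ ZMod m of additive order m/n, an n-cycle ρ ∈ Perm(Fin n) (a cycle whose support is all of Fin n), and i ∈ Fin n, define Ψ : ℕ → (Fin n → ZMod m) by Ψ(t)(j) = c·h where c = |{k ∈ {0,…,t−1} : ρ^k(i) = j}|. Then for all a, b ∈ ZMod m, the Hamming distance satisfies hammingDist(Ψ(a.val), Ψ(b.val)) = min((a−b).val, min(n, m − (a−b).val)). In particular, the pullback of the Hamming distance along Ψ is a translation-invariant metric on ZMod m whose associated weight of t is min(t, n, m−t). -/

import Mathlib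

private lemma count_mod_formula (n : ℕ) (hn : 0 < n) (δ v : ℕ) (hv : v < n) :
    ((Finset.range δ).filter fun u => u % n = v).card
      = δ / n + if v < δ % n then 1 else 0 := by
  induction δ with
  | zero => simp
  | succ δ ih =>
    have hs' : δ % n < n := Nat.mod_lt _ hn
    rw [Finset.range_add_one, Finset.filter_insert]
    rcases Nat.lt_or_ge (δ % n + 1) n with hc | hc
    · have hrw : δ + 1 = (δ % n + 1) + n * (δ / n) := by
        conv_lhs => rw [← Nat.div_add_mod' δ n]
        ring
      have hdiv : (δ + 1) / n = δ / n := by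
        rw [hrw, Nat.add_mul_div_left _ _ hn, Nat.div_eq_of_lt hc, Nat.zero_add]
      have hmod : (δ + 1) % n = δ % n + 1 := by
        rw [hrw, Nat.add_mul_mod_self_left, Nat.mod_eq_of_lt hc]
      by_cases hδv : δ % n = v
      · rw [if_pos hδv, Finset.card_insert_of_notMem (by simp), ih, hdiv, hmod]
        split_ifs <;> omega
      · rw [if_neg hδv, ih, hdiv, hmod]
        split_ifs <;> omega
    · have hceq : δ % n + 1 = n := by omega
      have hrw : δ + 1 = n * (δ / n + 1) := by
        conv_lhs => rw [← Nat.div_add_mod' δ n]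
        rw [Nat.mul_add, Nat.mul_one, Nat.mul_comm n (δ / n)]
        omega
      have hdiv : (δ + 1) / n = δ / n + 1 := by
        rw [hrw, Nat.mul_div_cancel_left _ hn]
      have hmod : (δ + 1) % n = 0 := by
        rw [hrw, Nat.mul_mod_right]
      by_cases hδv : δ % n = v
      · rw [if_pos hδv, Finset.card_insert_of_notMem (by simp), ih, hdiv, hmod]
        split_ifs <;> omega
      · rw [if_neg hδv, ih, hdiv, hmod]
        split_ifs <;> omega

private lemma final_count (n M m δ : ℕ) (hn : 0 < n) (hM : 2 ≤ M) (hm : n * M = m)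
    (hδ : δ < m) :
    ((Finset.range n).filter fun v => ¬ (M ∣ δ / n + if v < δ % n then 1 else 0)).card
      = min δ (min n (m - δ)) := by
  have hs' : δ % n < n := Nat.mod_lt _ hn
  have hqs : n * (δ / n) + δ % n = δ := Nat.div_add_mod δ n
  have hqM : δ / n < M := Nat.div_lt_of_lt_mul (by omega)
  rw [Finset.range_eq_Ico, ← Finset.Ico_union_Ico_eq_Ico (Nat.zero_le (δ % n)) hs'.le,
    Finset.filter_union,
    Finset.card_union_of_disjoint
      (Finset.disjoint_filter_filter (Finset.Ico_disjoint_Ico_consecutive _ _ _))]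
  have h1 : (Finset.Ico 0 (δ % n)).filter (fun v => ¬ (M ∣ δ / n + if v < δ % n then 1 else 0))
      = (Finset.Ico 0 (δ % n)).filter (fun _ => ¬ (M ∣ δ / n + 1)) := by
    apply Finset.filter_congr
    intro v hv
    simp only [Finset.mem_Ico] at hv
    rw [if_pos hv.2]
  have h2 : (Finset.Ico (δ % n) n).filter (fun v => ¬ (M ∣ δ / n + if v < δ % n then 1 else 0))
      = (Finset.Ico (δ % n) n).filter (fun _ => ¬ (M ∣ δ / n)) := by
    apply Finset.filter_congr
    intro v hv
    simp only [Finset.mem_Ico] at hv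
    rw [if_neg (not_lt.mpr hv.1), Nat.add_zero]
  rw [h1, h2, Finset.filter_const, Finset.filter_const, apply_ite Finset.card,
    apply_ite Finset.card, Nat.card_Ico, Nat.card_Ico]
  simp only [Finset.card_empty]
  by_cases hq0 : δ / n = 0
  · rw [if_pos (by rw [hq0, Nat.zero_add, Nat.dvd_one]; omega),
      if_neg (not_not_intro (by rw [hq0]; exact dvd_zero M))]
    rw [hq0, Nat.mul_zero, Nat.zero_add] at hqs
    have h2n : n * 2 ≤ m := by rw [← hm]; exact Nat.mul_le_mul_left n hM
    omega
  · by_cases hq1 : δ / n + 1 = M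
    · rw [if_neg (not_not_intro (by rw [hq1])),
        if_pos (fun hd => hq0 (Nat.eq_zero_of_dvd_of_lt hd hqM))]
      have hm2 : n * (δ / n) + n = m := by rw [← hm, ← hq1, Nat.mul_add, Nat.mul_one]
      have hAn : n ≤ n * (δ / n) := Nat.le_mul_of_pos_right n (Nat.pos_of_ne_zero hq0)
      generalize n * (δ / n) = A at hqs hm2 hAn
      omega
    · rw [if_pos (fun hd => hq1 (by have := Nat.le_of_dvd (Nat.succ_pos _) hd; omega)),
        if_pos (fun hd => hq0 (Nat.eq_zero_of_dvd_of_lt hd hqM))]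
      have hm2 : n * (δ / n) + 2 * n ≤ m := by
        rw [← hm]
        calc n * (δ / n) + 2 * n = n * (δ / n + 2) := by ring
        _ ≤ n * M := Nat.mul_le_mul_left n (by omega)
      have hAn : n ≤ n * (δ / n) := Nat.le_mul_of_pos_right n (Nat.pos_of_ne_zero hq0)
      generalize n * (δ / n) = A at hqs hm2 hAn
      omega

private lemma mod_eq_val_iff {n : ℕ} [NeZero n] (k : ℕ) (x : ZMod n) :
    k % n = x.val ↔ (k : ZMod n) = x := by
  constructor
  · intro hk
    conv_rhs => rw [← ZMod.natCast_rightInverse x]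
    rw [← hk, ZMod.natCast_mod]
  · intro hk
    rw [← hk, ZMod.val_natCast]

theorem stmt_6 (m n : ℕ) (hn : 0 < n) (hdvd : n ∣ m) (hlt : n < m)
    (h : ZMod m) (hord : addOrderOf h = m / n)
    (ρ : Equiv.Perm (Fin n))
    (hρ : ∀ x y : Fin n, ∃ k : ℕ, (ρ ^ k) x = y)
    (i : Fin n)
    (Ψ : ℕ → Fin n → ZMod m)
    (hΨ : ∀ t j, Ψ t j = ((Finset.range t).filter fun k => (ρ ^ k) i = j).card • h) :
    ∀ a b : ZMod m,
      hammingDist (Ψ a.val) (Ψ b.val)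
        = min (a - b).val (min n (m - (a - b).val)) := by
  classical
  have hm0 : 0 < m := hn.trans hlt
  haveI : NeZero m := ⟨hm0.ne'⟩
  haveI : NeZero n := ⟨hn.ne'⟩
  obtain ⟨M, hM⟩ := hdvd
  have hM2 : 2 ≤ M := by
    rcases M with _ | _ | M
    · omega
    · omega
    · omega
  have hMdiv : m / n = M := by rw [hM, Nat.mul_div_cancel_left _ hn]
  -- period of i under ρ is n
  have hper : Function.IsPeriodicPt ⇑ρ (orderOf ρ) i := by
    show (⇑ρ)^[orderOf ρ] i = i
    rw [← Equiv.Perm.coe_pow, pow_orderOf_eq_one]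
    rfl
  set p := Function.minimalPeriod ⇑ρ i with hp
  have hp0 : 0 < p := hper.minimalPeriod_pos (orderOf_pos ρ)
  have hpn : p = n := by
    have himg : Finset.image (fun k => (⇑ρ)^[k] i) (Finset.range p) = Finset.univ := by
      apply Finset.eq_univ_of_forall
      intro j
      obtain ⟨k, hk⟩ := hρ i j
      rw [Finset.mem_image]
      exact ⟨k % p, Finset.mem_range.mpr (Nat.mod_lt _ hp0),
        by rw [Function.iterate_mod_minimalPeriod_eq, ← Equiv.Perm.coe_pow]; exact hk⟩
    have hinj : Set.InjOn (fun k => (⇑ρ)^[k] i) (Finset.range p : Set ℕ) := by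
      intro x hx y hy hxy
      exact Function.iterate_injOn_Iio_minimalPeriod (by simpa using hx) (by simpa using hy) hxy
    have h1 := Finset.card_image_of_injOn hinj
    rw [himg, Finset.card_univ, Fintype.card_fin, Finset.card_range] at h1
    omega
  have hiffp : ∀ k l : ℕ, (ρ ^ k) i = (ρ ^ l) i ↔ k % p = l % p := by
    intro k l
    constructor
    · intro hkl
      apply Function.iterate_injOn_Iio_minimalPeriod (x := i) (f := ⇑ρ)
        (Set.mem_Iio.mpr (Nat.mod_lt _ hp0)) (Set.mem_Iio.mpr (Nat.mod_lt _ hp0))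
      show (⇑ρ)^[k % p] i = (⇑ρ)^[l % p] i
      rw [Function.iterate_mod_minimalPeriod_eq, Function.iterate_mod_minimalPeriod_eq,
        ← Equiv.Perm.coe_pow, ← Equiv.Perm.coe_pow]
      exact hkl
    · intro hkl
      have hit : (⇑ρ)^[k] i = (⇑ρ)^[l] i := by
        rw [← Function.iterate_mod_minimalPeriod_eq (n := k),
          ← Function.iterate_mod_minimalPeriod_eq (n := l), ← hp, hkl]
      rw [Equiv.Perm.coe_pow, Equiv.Perm.coe_pow]
      exact hit
  have hiff : ∀ k l : ℕ, (ρ ^ k) i = (ρ ^ l) i ↔ k % n = l % n := by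
    intro k l
    rw [hiffp k l, hpn]
  -- residue function
  have hrex : ∀ j : Fin n, ∃ r : ℕ, r < n ∧ (ρ ^ r) i = j := by
    intro j
    obtain ⟨k, hk⟩ := hρ i j
    refine ⟨k % n, Nat.mod_lt _ hn, ?_⟩
    rw [← hk, hiff (k % n) k, Nat.mod_mod_of_dvd k (dvd_refl n)]
  choose r hrlt hr using hrex
  -- KEY lemma
  have KEY : ∀ s δ : ℕ, δ < m →
      hammingDist (Ψ (s + δ)) (Ψ s) = min δ (min n (m - δ)) := by
    intro s δ hδm
    set w : Fin n → ℕ := fun j => ((r j : ZMod n) - (s : ZMod n)).val with hw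
    have hwlt : ∀ j, w j < n := fun j => ZMod.val_lt _
    have hsplit : ∀ j : Fin n, ((Finset.range (s + δ)).filter fun k => (ρ ^ k) i = j).card
        = ((Finset.range s).filter fun k => (ρ ^ k) i = j).card
          + ((Finset.range δ).filter fun u => (ρ ^ (s + u)) i = j).card := by
      intro j
      rw [Finset.range_eq_Ico,
        ← Finset.Ico_union_Ico_eq_Ico (Nat.zero_le s) (Nat.le_add_right s δ),
        Finset.filter_union,
        Finset.card_union_of_disjoint
          (Finset.disjoint_filter_filter (Finset.Ico_disjoint_Ico_consecutive _ _ _)),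
        ← Finset.range_eq_Ico]
      congr 1
      have hmap : Finset.Ico s (s + δ)
          = (Finset.range δ).map ⟨fun u => s + u, fun a b hab => by simp at hab; omega⟩ := by
        ext k
        simp only [Finset.mem_Ico, Finset.mem_map, Finset.mem_range,
          Function.Embedding.coeFn_mk]
        constructor
        · intro hk; exact ⟨k - s, by omega, by show s + (k - s) = k; omega⟩
        · rintro ⟨u, hu, rfl⟩; show s ≤ s + u ∧ s + u < s + δ; omega
      rw [hmap, Finset.filter_map, Finset.card_map]
      rfl
    have hcount : ∀ j : Fin n, ((Finset.range δ).filter fun u => (ρ ^ (s + u)) i = j).card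
        = ((Finset.range δ).filter fun u => u % n = w j).card := by
      intro j
      congr 1
      apply Finset.filter_congr
      intro u _
      have e0 : ((ρ ^ (s + u)) i = j) ↔ (s + u) % n = r j := by
        conv_lhs => rw [← hr j]
        rw [hiff (s + u) (r j), Nat.mod_eq_of_lt (hrlt j)]
      have eA : (s + u) % n = r j ↔ ((s + u : ℕ) : ZMod n) = ((r j : ℕ) : ZMod n) := by
        have hx := mod_eq_val_iff (n := n) (s + u) ((r j : ℕ) : ZMod n)
        rwa [ZMod.val_natCast_of_lt (hrlt j)] at hx
      have eB : u % n = w j ↔ (u : ZMod n) = ((r j : ℕ) : ZMod n) - (s : ZMod n) :=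
        mod_eq_val_iff u _
      rw [e0, eA, eB]
      push_cast
      constructor
      · intro hh; rw [← hh]; ring
      · intro hh; rw [hh]; ring
    have hMne : addOrderOf h = M := by rw [hord, hMdiv]
    have hne : ∀ j : Fin n, (Ψ (s + δ) j ≠ Ψ s j)
        ↔ ¬ (M ∣ ((Finset.range δ).filter fun u => u % n = w j).card) := by
      intro j
      rw [hΨ, hΨ, hsplit j, hcount j, add_nsmul, ne_eq, add_eq_left,
        ← addOrderOf_dvd_iff_nsmul_eq_zero, hMne]
    have winj : ∀ a b : Fin n, w a = w b → a = b := by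
      intro a b hab
      have h1 : ((r a : ℕ) : ZMod n) - (s : ZMod n) = ((r b : ℕ) : ZMod n) - (s : ZMod n) :=
        ZMod.val_injective n hab
      have h2 : ((r a : ℕ) : ZMod n) = ((r b : ℕ) : ZMod n) := by
        have h2' := congrArg (fun z => z + (s : ZMod n)) h1
        simpa using h2'
      have h3 : r a = r b := by
        have h3' := congrArg ZMod.val h2
        rwa [ZMod.val_natCast_of_lt (hrlt a), ZMod.val_natCast_of_lt (hrlt b)] at h3'
      rw [← hr a, ← hr b, h3]
    simp only [hammingDist]
    have hbij : (Finset.univ.filter fun j => Ψ (s + δ) j ≠ Ψ s j).card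
        = ((Finset.range n).filter fun v =>
            ¬ (M ∣ ((Finset.range δ).filter fun u => u % n = v).card)).card := by
      apply Finset.card_bij (fun j _ => w j)
      · intro j hj
        simp only [Finset.mem_filter, Finset.mem_range] at hj ⊢
        exact ⟨hwlt j, (hne j).mp hj.2⟩
      · intro a ha b hb hab
        exact winj a b hab
      · intro v hv
        simp only [Finset.mem_filter, Finset.mem_range] at hv
        obtain ⟨j, hj⟩ : ∃ j : Fin n, w j = v := by
          have hWinj : Function.Injective (fun j : Fin n => (⟨w j, hwlt j⟩ : Fin n)) := by
            intro a b hab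
            exact winj a b (congrArg Fin.val hab)
          obtain ⟨j, hj⟩ := Finite.surjective_of_injective hWinj ⟨v, hv.1⟩
          exact ⟨j, congrArg Fin.val hj⟩
        exact ⟨j, Finset.mem_filter.mpr ⟨Finset.mem_univ j, (hne j).mpr (hj ▸ hv.2)⟩, hj⟩
    rw [hbij,
      Finset.filter_congr (fun v hv => by
        rw [count_mod_formula n hn δ v (Finset.mem_range.mp hv)])]
    exact final_count n M m δ hn hM2 hM.symm hδm
  -- conclude
  intro a b
  rcases le_or_gt b.val a.val with hba | hba
  · have hsub : (a - b).val = a.val - b.val := ZMod.val_sub hba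
    have h1 : hammingDist (Ψ a.val) (Ψ b.val)
        = hammingDist (Ψ (b.val + (a.val - b.val))) (Ψ b.val) := by
      rw [Nat.add_sub_cancel' hba]
    rw [h1, KEY b.val (a.val - b.val) (by have := ZMod.val_lt a; omega), hsub]
  · have hne2 : b - a ≠ 0 := sub_ne_zero.mpr (by
      intro e; rw [e] at hba; exact lt_irrefl _ hba)
    have h1 : (b - a).val = b.val - a.val := ZMod.val_sub hba.le
    have h2 : (a - b).val = m - (b - a).val := by
      have hab : a - b = -(b - a) := by ring
      rw [hab, ZMod.neg_val, if_neg hne2]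
    rw [hammingDist_comm]
    have h3 : hammingDist (Ψ b.val) (Ψ a.val)
        = hammingDist (Ψ (a.val + (b.val - a.val))) (Ψ a.val) := by
      rw [Nat.add_sub_cancel' hba.le]
    rw [h3, KEY a.val (b.val - a.val) (by have := ZMod.val_lt b; omega), ← h1]
    have hv1 := ZMod.val_lt (b - a)
    have hv2 := ZMod.val_lt (a - b)
    omega
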